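/- Let n ≥ 2 be a natural number and let f : [0,∞) → ℝ be any function. Then f,0 ⊭ₙ ψ, i.e., the discrete semantics of ψ fails at time 0 for every path. -/

import Mathlib

open scoped NNReal ENNReal Topology

/-- The grid `ℕ/n = {k/n : k ∈ ℕ}` inside `[0,∞)`. -/
def grid (n : ℕ) : Set ℝ≥0 := {t | ∃ k : ℕ, t = (k : ℝ≥0) / (n : ℝ≥0)}

/-- Discrete `◇_I φ` at time `t`: there is `s ∈ I ∩ ℕ/n` with `φ` at `t+s`. -/
def DiaD (n : ℕ) (I : Set ℝ≥0) (φ : ℝ≥0 → Prop) (t : ℝ≥0) : Prop := ∃ s ∈ I ∩ grid n, φ (t + s)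

/-- Discrete `□_I φ` at time `t`: for all `s ∈ I ∩ ℕ/n`, `φ` at `t+s`. -/
def BoxD (n : ℕ) (I : Set ℝ≥0) (φ : ℝ≥0 → Prop) (t : ℝ≥0) : Prop := ∀ s ∈ I ∩ grid n, φ (t + s)

/-- The atomic proposition `p`: `f(t) ≥ 1`. -/
def SatP (f : ℝ≥0 → ℝ) (t : ℝ≥0) : Prop := 1 ≤ f t

/-- Discrete semantics of `φ₁ := □_{(1,2)}(◇_{(1,4)}p ∧ ¬◇_{(1,3)}p)`. -/
def Phi1D (f : ℝ≥0 → ℝ) (n : ℕ) : ℝ≥0 → Prop :=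
  BoxD n (Set.Ioo 1 2) fun u =>
    DiaD n (Set.Ioo 1 4) (SatP f) u ∧ ¬ DiaD n (Set.Ioo 1 3) (SatP f) u

/-- Discrete semantics of `φ₂ := (◇_{(1,3)}φ₁) ∧ (¬◇_{(1,2)}φ₁) ∧ (¬◇_{(2,3)}φ₁)`. -/
def Phi2D (f : ℝ≥0 → ℝ) (n : ℕ) : ℝ≥0 → Prop := fun t =>
  DiaD n (Set.Ioo 1 3) (Phi1D f n) t ∧ ¬ DiaD n (Set.Ioo 1 2) (Phi1D f n) t ∧
    ¬ DiaD n (Set.Ioo 2 3) (Phi1D f n) t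

/-- Discrete semantics of `φ₃ := ◇_{(1,2)}φ₂`. -/
def Phi3D (f : ℝ≥0 → ℝ) (n : ℕ) : ℝ≥0 → Prop := DiaD n (Set.Ioo 1 2) (Phi2D f n)

/-- Discrete semantics of `ψ := (¬p) ∧ (¬◇_{(0,8)}p) ∧ φ₃`. -/
def PsiD (f : ℝ≥0 → ℝ) (n : ℕ) : ℝ≥0 → Prop := fun t =>
  ¬ SatP f t ∧ ¬ DiaD n (Set.Ioo 0 8) (SatP f) t ∧ Phi3D f n t

lemma grid_Ioo_iff {n a b k : ℕ} (hn : 0 < n) :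
    ((k:ℝ≥0)/(n:ℝ≥0) ∈ Set.Ioo (a:ℝ≥0) (b:ℝ≥0)) ↔ (a*n < k ∧ k < b*n) := by
  have hn' : (0:ℝ≥0) < n := by exact_mod_cast hn
  rw [Set.mem_Ioo, lt_div_iff₀ hn', div_lt_iff₀ hn']
  constructor
  · rintro ⟨h1, h2⟩; exact ⟨by exact_mod_cast h1, by exact_mod_cast h2⟩
  · rintro ⟨h1, h2⟩; exact ⟨by exact_mod_cast h1, by exact_mod_cast h2⟩

lemma mem_Ioo_grid {n : ℕ} (a b : ℕ) {k : ℕ} (hn : 0 < n) (h1 : a*n < k) (h2 : k < b*n) :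
    (k:ℝ≥0)/(n:ℝ≥0) ∈ Set.Ioo (a:ℝ≥0) (b:ℝ≥0) := (grid_Ioo_iff hn).2 ⟨h1, h2⟩

lemma grid_add (n a b : ℕ) :
    ((a:ℝ≥0))/(n:ℝ≥0) + (b:ℝ≥0)/(n:ℝ≥0) = (((a+b:ℕ)):ℝ≥0)/(n:ℝ≥0) := by
  rw [← add_div]; norm_cast

/-- for every natural `n ≥ 2` and every `f : [0,∞) → ℝ`, the discrete
semantics of `ψ` fails at time `0`. -/
theorem stmt_8 (n : ℕ) (hn : 2 ≤ n) (f : ℝ≥0 → ℝ) : ¬ PsiD f n 0 := by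
  rintro ⟨hp, h08, h3⟩
  have hpos : 0 < n := by omega
  obtain ⟨s, ⟨hs12, i, rfl⟩, hφ2⟩ := h3
  rw [zero_add] at hφ2
  have hi : 1*n < i ∧ i < 2*n := (grid_Ioo_iff (a := 1) (b := 2) hpos).1 (by exact_mod_cast hs12)
  obtain ⟨⟨u, ⟨hu13, j, rfl⟩, hφ1⟩, h12, h23⟩ := hφ2
  have hj : 1*n < j ∧ j < 3*n := (grid_Ioo_iff (a := 1) (b := 3) hpos).1 (by exact_mod_cast hu13)
  -- pin j = 2n
  have hj2 : j = 2*n := by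
    rcases lt_trichotomy j (2*n) with h | h | h
    · refine absurd ⟨(j:ℝ≥0)/(n:ℝ≥0), ⟨?_, ⟨j, rfl⟩⟩, hφ1⟩ h12
      exact_mod_cast mem_Ioo_grid 1 2 hpos (by omega) (by omega)
    · exact h
    · refine absurd ⟨(j:ℝ≥0)/(n:ℝ≥0), ⟨?_, ⟨j, rfl⟩⟩, hφ1⟩ h23
      exact_mod_cast mem_Ioo_grid 2 3 hpos (by omega) (by omega)
  subst hj2
  rw [grid_add] at hφ1
  set M : ℕ := i + 2*n with hM
  -- the no-p zone
  have C1 : ∀ k : ℕ, 2*n+2 ≤ k → k+2 ≤ 5*n → ¬ SatP f (((M+k:ℕ):ℝ≥0)/(n:ℝ≥0)) := by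
    intro k hk1 hk2 hQ
    set j := max (n+1) (k+1-3*n) with hjdef
    have hmem1 : (j:ℝ≥0)/(n:ℝ≥0) ∈ Set.Ioo (1:ℝ≥0) 2 := by
      exact_mod_cast mem_Ioo_grid 1 2 hpos (by omega) (by omega)
    have hmem2 : ((k-j:ℕ):ℝ≥0)/(n:ℝ≥0) ∈ Set.Ioo (1:ℝ≥0) 3 := by
      exact_mod_cast mem_Ioo_grid 1 3 hpos (by omega) (by omega)
    refine (hφ1 ((j:ℝ≥0)/(n:ℝ≥0)) ⟨hmem1, ⟨j, rfl⟩⟩).2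
      ⟨((k-j:ℕ):ℝ≥0)/(n:ℝ≥0), ⟨hmem2, ⟨k-j, rfl⟩⟩, ?_⟩
    rw [grid_add, grid_add, show M + j + (k-j) = M + k from by omega]
    exact hQ
  -- the existential witness at v = (n+1)/n
  have hmemv : (((n+1:ℕ)):ℝ≥0)/(n:ℝ≥0) ∈ Set.Ioo (1:ℝ≥0) 2 := by
    exact_mod_cast mem_Ioo_grid 1 2 hpos (by omega) (by omega)
  obtain ⟨⟨r, ⟨hr14, l, rfl⟩, hQ⟩, hno13⟩ := hφ1 (((n+1:ℕ):ℝ≥0)/(n:ℝ≥0)) ⟨hmemv, ⟨n+1, rfl⟩⟩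
  have hl : 1*n < l ∧ l < 4*n := (grid_Ioo_iff (a := 1) (b := 4) hpos).1 (by exact_mod_cast hr14)
  have hl3 : 3*n ≤ l := by
    by_contra hlt
    refine hno13 ⟨((l:ℝ≥0))/(n:ℝ≥0), ⟨?_, ⟨l, rfl⟩⟩, hQ⟩
    exact_mod_cast mem_Ioo_grid 1 3 hpos (by omega) (by omega)
  rw [grid_add, grid_add] at hQ
  -- hQ : SatP f ((M + (n+1) + l)/n), with  n+1+l ∈ [4n+1, 5n]
  have hltop : 4*n - 2 ≤ l := by
    by_contra hlt
    refine C1 (n+1+l) (by omega) (by omega) ?_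
    rwa [show M + (n+1+l) = M + (n+1) + l from by omega]
  by_cases ha : SatP f (((M + (2*n+1) : ℕ):ℝ≥0)/(n:ℝ≥0))
  · -- p occurs strictly inside (0,8): contradiction with h08
    refine h08 ⟨((M + (2*n+1):ℕ):ℝ≥0)/(n:ℝ≥0), ⟨?_, ⟨_, rfl⟩⟩, ?_⟩
    · exact_mod_cast mem_Ioo_grid 0 8 hpos (by omega) (by omega)
    · rw [zero_add]; exact ha
  by_cases hb : SatP f (((M + (5*n-1) : ℕ):ℝ≥0)/(n:ℝ≥0))
  · -- then Phi1D holds at (i + (2n-1))/n, contradicting h12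
    refine h12 ⟨((2*n-1:ℕ):ℝ≥0)/(n:ℝ≥0), ⟨?_, ⟨_, rfl⟩⟩, ?_⟩
    · exact_mod_cast mem_Ioo_grid 1 2 hpos (by omega) (by omega)
    rw [grid_add]
    rintro v ⟨hv, j, rfl⟩
    have hjb : 1*n < j ∧ j < 2*n := (grid_Ioo_iff (a := 1) (b := 2) hpos).1 (by exact_mod_cast hv)
    constructor
    · refine ⟨((5*n-j:ℕ):ℝ≥0)/(n:ℝ≥0), ⟨?_, ⟨_, rfl⟩⟩, ?_⟩
      · exact_mod_cast mem_Ioo_grid 1 4 hpos (by omega) (by omega)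
      rw [grid_add, grid_add, show i + (2*n-1) + j + (5*n-j) = M + (5*n-1) from by omega]
      exact hb
    · rintro ⟨r, ⟨hr, m, rfl⟩, hQ'⟩
      have hmb : 1*n < m ∧ m < 3*n := (grid_Ioo_iff (a := 1) (b := 3) hpos).1 (by exact_mod_cast hr)
      rw [grid_add, grid_add] at hQ'
      rcases Nat.lt_or_ge (j+m) (2*n+3) with h | h
      · exact ha (by rwa [show i + (2*n-1) + j + m = M + (2*n+1) from by omega] at hQ')
      · exact C1 (j+m-1) (by omega) (by omega)
          (by rwa [show i + (2*n-1) + j + m = M + (j+m-1) from by omega] at hQ')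
  · -- then l = 4n-1, p at (M+5n)/n, and Phi1D holds at (i + (2n+1))/n, contradicting h23
    have hc : SatP f (((M + 5*n : ℕ):ℝ≥0)/(n:ℝ≥0)) := by
      rcases Nat.lt_or_ge l (4*n-1) with h | h
      · exact absurd (by rwa [show M + (n+1) + l = M + (5*n-1) from by omega] at hQ) hb
      · rwa [show M + (n+1) + l = M + 5*n from by omega] at hQ
    refine h23 ⟨((2*n+1:ℕ):ℝ≥0)/(n:ℝ≥0), ⟨?_, ⟨_, rfl⟩⟩, ?_⟩
    · exact_mod_cast mem_Ioo_grid 2 3 hpos (by omega) (by omega)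
    rw [grid_add]
    rintro v ⟨hv, j, rfl⟩
    have hjb : 1*n < j ∧ j < 2*n := (grid_Ioo_iff (a := 1) (b := 2) hpos).1 (by exact_mod_cast hv)
    constructor
    · refine ⟨((5*n-1-j:ℕ):ℝ≥0)/(n:ℝ≥0), ⟨?_, ⟨_, rfl⟩⟩, ?_⟩
      · exact_mod_cast mem_Ioo_grid 1 4 hpos (by omega) (by omega)
      rw [grid_add, grid_add, show i + (2*n+1) + j + (5*n-1-j) = M + 5*n from by omega]
      exact hc
    · rintro ⟨r, ⟨hr, m, rfl⟩, hQ'⟩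
      have hmb : 1*n < m ∧ m < 3*n := (grid_Ioo_iff (a := 1) (b := 3) hpos).1 (by exact_mod_cast hr)
      rw [grid_add, grid_add] at hQ'
      rcases Nat.lt_or_ge (j+m) (5*n-2) with h | h
      · exact C1 (j+m+1) (by omega) (by omega)
          (by rwa [show i + (2*n+1) + j + m = M + (j+m+1) from by omega] at hQ')
      · exact hb (by rwa [show i + (2*n+1) + j + m = M + (5*n-1) from by omega] at hQ')
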